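/- Validity of the φ-expansion for βx+α mod 1. Let 0 ≤ α < 1 < β and k := ⌈α+β⌉, A := {0,…,k−1}. Then: (i) for every x ∈ [0,1]∖S, limₙ φ̄ₙ^{α,β}(i(x)) = x (the φ-expansion is valid); (ii) {i(x) : x ∈ [0,1]∖S} = {x ∈ A^ℕ : u^{α,β} ≺ σⁿx ≺ v^{α,β} for all n ≥ 0}; (iii) u^{α,β} ≼ σⁿu^{α,β} ≺ v^{α,β} and u^{α,β} ≺ σⁿv^{α,β} ≼ v^{α,β} for all n ≥ 0. -/

import Mathlib

open Filter Set

/-- The shift map on one-sided sequences. -/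
def shft (x : ℕ → ℕ) : ℕ → ℕ := fun n => x (n + 1)

/-- Strict lexicographic order on one-sided sequences:
`x ≺ y` iff they differ and `x m < y m` at the first index `m` where they differ. -/
def lexLt (x y : ℕ → ℕ) : Prop := ∃ m, (∀ i, i < m → x i = y i) ∧ x m < y m

/-- Lexicographic order `x ≼ y` on one-sided sequences. -/
def lexLe (x y : ℕ → ℕ) : Prop := x = y ∨ lexLt x y

/-- The map `φ̄^{α,β} : ℝ → [0,1]`:  `0` for `t ≤ α`, `(t-α)/β` for `α ≤ t ≤ α+β`,
`1` for `t ≥ α+β`. -/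
noncomputable def phiB (α β t : ℝ) : ℝ :=
  if t ≤ α then 0 else if α + β ≤ t then 1 else (t - α) / β

/-- `φ̄ₙ^{α,β}(x) = φ̄^{α,β}(x₀ + φ̄^{α,β}(x₁ + ⋯ + φ̄^{α,β}(x_{n-1})⋯))`. -/
noncomputable def phiBN (α β : ℝ) : ℕ → (ℕ → ℕ) → ℝ
  | 0, _ => 0
  | n + 1, x => phiB α β (x 0 + phiBN α β n (shft x))

/-- `φ̄_∞^{α,β}(x) = limₙ φ̄ₙ^{α,β}(x)`; the sequence `φ̄ₙ^{α,β}(x)` is nondecreasing in `n`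
and bounded, so its limit is its supremum. -/
noncomputable def phiBInf (α β : ℝ) (x : ℕ → ℕ) : ℝ := ⨆ n, phiBN α β n x

/-- `T̂_{α,β}(x) = βx + α − ⌊βx + α⌋`. -/
noncomputable def Tlow (α β x : ℝ) : ℝ := β * x + α - ⌊β * x + α⌋

/-- `Ť_{α,β}(x) = βx + α + 1 − ⌈βx + α⌉`. -/
noncomputable def Thigh (α β x : ℝ) : ℝ := β * x + α + 1 - ⌈β * x + α⌉

/-- `k = ⌈α + β⌉`, the size of the alphabet `A = {0, …, k-1}`. -/
noncomputable def kAB (α β : ℝ) : ℕ := (⌈α + β⌉).toNat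

/-- The string `u^{α,β}`, the coding of the orbit of `0`:
`u^{α,β}ₙ = ⌊β T̂ⁿ_{α,β}(0) + α⌋`. -/
noncomputable def uItin (α β : ℝ) : ℕ → ℕ := fun n => (⌊β * (Tlow α β)^[n] 0 + α⌋).toNat

/-- The string `v^{α,β}`, the coding of the orbit of `1`:
`v^{α,β}ₙ = ⌈β Ťⁿ_{α,β}(1) + α⌉ − 1`. -/
noncomputable def vItin (α β : ℝ) : ℕ → ℕ := fun n => (⌈β * (Thigh α β)^[n] 1 + α⌉ - 1).toNat

/-- The shift space `Σ(u,v) = {x ∈ A^ℕ : u ≼ σⁿx ≼ v for all n ≥ 0}`, `A = {0,…,k-1}`. -/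
def SigSet (k : ℕ) (u v : ℕ → ℕ) : Set (ℕ → ℕ) :=
  {x | (∀ i, x i < k) ∧ ∀ n, lexLe u (shft^[n] x) ∧ lexLe (shft^[n] x) v}

/-- The number of words of length `n` in the language of `Σ(u,v)` (prefixes of elements). -/
noncomputable def nWords (k : ℕ) (u v : ℕ → ℕ) (n : ℕ) : ℕ :=
  Nat.card {w : Fin n → ℕ // ∃ x ∈ SigSet k u v, ∀ i : Fin n, x i.1 = w i}

/-- The topological entropy (base 2) of `Σ(u,v)`:
`h = limₙ (1/n) log₂ card(Lₙ)` (the limit exists by subadditivity, so it equals the limsup;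
it is `0` when `Σ(u,v) = ∅`). -/
noncomputable def entS (k : ℕ) (u v : ℕ → ℕ) : ℝ :=
  Filter.limsup (fun n : ℕ => Real.logb 2 (nWords k u v n) / (n : ℝ)) Filter.atTop

/-- Concatenation of the word `w₀ ⋯ w_{p-1}` (the first `p` letters of `w`) with the
string `y`. -/
def wcat (p : ℕ) (w y : ℕ → ℕ) : ℕ → ℕ := fun n => if n < p then w n else y (n - p)

/-- The partition points for the system `βx + α mod 1`:
`a 0 = 0`, `a k = 1`, `a j = (j − α)/β` for `j = 1, …, k−1`. -/
noncomputable def ptAB (α β : ℝ) (j : ℕ) : ℝ :=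
  if j = 0 then 0 else if j = kAB α β then 1 else ((j : ℝ) - α) / β

/-- The branch interval `I j = (a j, a (j+1))`. -/
noncomputable def IAB (α β : ℝ) (j : ℕ) : Set ℝ := Set.Ioo (ptAB α β j) (ptAB α β (j + 1))

open Classical in
/-- The transformation `T x = βx + α − j` for `x ∈ I j` (junk value `0` elsewhere). -/
noncomputable def TAB (α β : ℝ) (x : ℝ) : ℝ :=
  if h : ∃ j, j < kAB α β ∧ x ∈ IAB α β j then β * x + α - (h.choose : ℝ) else 0

/-- `S₀ = {a 0, a 1, …, a k}`. -/
def S0AB (α β : ℝ) : Set ℝ := {y | ∃ j, j ≤ kAB α β ∧ y = ptAB α β j}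

/-- The singular set `S` for `βx + α mod 1`. -/
def SAB (α β : ℝ) : Set ℝ :=
  {x ∈ Set.Icc (0 : ℝ) 1 |
    ∃ m, (TAB α β)^[m] x ∈ S0AB α β ∧ ∀ i, i < m → (TAB α β)^[i] x ∉ S0AB α β}

open Classical in
/-- The coding map: `(codeAB α β x) n = j` iff `Tⁿ x ∈ I j`. -/
noncomputable def codeAB (α β : ℝ) (x : ℝ) : ℕ → ℕ := fun n =>
  if h : ∃ j, j < kAB α β ∧ (TAB α β)^[n] x ∈ IAB α β j then h.choose else 0

set_option linter.unusedSectionVars false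

section Aux
variable {α β : ℝ}

lemma shft_iterate_apply (n : ℕ) (y : ℕ → ℕ) (i : ℕ) : (shft^[n] y) i = y (i + n) := by
  induction n generalizing y i with
  | zero => rfl
  | succ n ih =>
    rw [Function.iterate_succ_apply, ih]
    rfl

lemma phiB_eq_clamp (hb : 0 < β) (t : ℝ) :
    phiB α β t = max 0 (min 1 ((t - α) / β)) := by
  unfold phiB
  split_ifs with h1 h2
  · have hx : (t - α) / β ≤ 0 := div_nonpos_iff.2 (Or.inr ⟨by linarith, hb.le⟩)
    rw [min_eq_right (hx.trans zero_le_one), max_eq_left hx]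
  · have hx : 1 ≤ (t - α) / β := (one_le_div hb).2 (by linarith)
    rw [min_eq_left hx, max_eq_right zero_le_one]
  · push_neg at h1 h2
    have hx0 : 0 ≤ (t - α) / β := div_nonneg (by linarith) hb.le
    have hx1 : (t - α) / β ≤ 1 := (div_le_one hb).2 (by linarith)
    rw [min_eq_right hx1, max_eq_right hx0]

lemma phiB_nonneg (hb : 0 < β) (t : ℝ) : 0 ≤ phiB α β t := by
  rw [phiB_eq_clamp hb]; exact le_max_left _ _

lemma phiB_le_one (hb : 0 < β) (t : ℝ) : phiB α β t ≤ 1 := by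
  rw [phiB_eq_clamp hb]
  exact max_le zero_le_one (min_le_left _ _)

lemma phiB_mono (hb : 0 < β) {s t : ℝ} (h : s ≤ t) : phiB α β s ≤ phiB α β t := by
  rw [phiB_eq_clamp hb, phiB_eq_clamp hb]
  have : (s - α) / β ≤ (t - α) / β := by gcongr
  exact max_le_max le_rfl (min_le_min le_rfl this)

lemma clamp_lip {a b : ℝ} (h : b ≤ a) :
    max 0 (min 1 a) - max 0 (min 1 b) ≤ a - b := by
  rcases le_or_gt a 0 with ha | ha
  · have h1 : max 0 (min 1 a) = 0 := max_eq_left ((min_le_right _ _).trans ha)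
    have h2 : max 0 (min 1 b) = 0 := max_eq_left ((min_le_right _ _).trans (h.trans ha))
    rw [h1, h2]; linarith
  · rcases le_or_gt 1 b with hb1 | hb1
    · have h2 : max 0 (min 1 b) = 1 := by rw [min_eq_left hb1]; exact max_eq_right zero_le_one
      have h1 : max 0 (min 1 a) ≤ 1 := max_le zero_le_one (min_le_left _ _)
      rw [h2]; linarith
    · have h1 : max 0 (min 1 a) ≤ a := max_le ha.le (min_le_right _ _)
      have h2 : b ≤ max 0 (min 1 b) := by
        rw [min_eq_right hb1.le]; exact le_max_right _ _
      linarith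

lemma phiB_lip (hb : 0 < β) {s t : ℝ} (h : s ≤ t) :
    phiB α β t ≤ phiB α β s + (t - s) / β := by
  rw [phiB_eq_clamp hb, phiB_eq_clamp hb]
  have h2 : (s - α) / β ≤ (t - α) / β := by gcongr
  have := clamp_lip (a := (t - α)/β) (b := (s - α)/β) h2
  have h3 : (t - α) / β - (s - α) / β = (t - s) / β := by ring
  linarith

lemma phiB_eval (hb : 0 < β) {t : ℝ} (h1 : α ≤ t) (h2 : t ≤ α + β) :
    phiB α β t = (t - α) / β := by
  rw [phiB_eq_clamp hb]
  have hx0 : 0 ≤ (t - α) / β := div_nonneg (by linarith) hb.le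
  have hx1 : (t - α) / β ≤ 1 := (div_le_one hb).2 (by linarith)
  rw [min_eq_right hx1, max_eq_right hx0]

end Aux

noncomputable def phiC (α β : ℝ) : ℕ → (ℕ → ℕ) → ℝ → ℝ
  | 0, _, t => t
  | n + 1, y, t => phiB α β (y 0 + phiC α β n (shft y) t)

section Aux2
variable {α β : ℝ}

lemma phiC_mono (hb : 0 < β) {s t : ℝ} (h : s ≤ t) :
    ∀ n (y : ℕ → ℕ), phiC α β n y s ≤ phiC α β n y t := by
  intro n
  induction n with
  | zero => intro y; exact h
  | succ n ih => intro y; exact phiB_mono hb (by linarith [ih (shft y)])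

lemma phiC_congr {t : ℝ} : ∀ n {y z : ℕ → ℕ}, (∀ i, i < n → y i = z i) →
    phiC α β n y t = phiC α β n z t := by
  intro n
  induction n with
  | zero => intro y z _; rfl
  | succ n ih =>
    intro y z h
    show phiB α β (y 0 + phiC α β n (shft y) t) = phiB α β (z 0 + phiC α β n (shft z) t)
    have hih : phiC α β n (shft y) t = phiC α β n (shft z) t :=
      ih (y := shft y) (z := shft z) (fun i hi => h (i+1) (by omega))
    rw [h 0 (Nat.succ_pos n), hih]

lemma phiC_lip (hb : 0 < β) {s t : ℝ} (h : s ≤ t) :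
    ∀ n (y : ℕ → ℕ), phiC α β n y t ≤ phiC α β n y s + (t - s) / β ^ n := by
  intro n
  induction n with
  | zero => intro y; simp [phiC]
  | succ n ih =>
    intro y
    have h1 : phiC α β n (shft y) t ≤ phiC α β n (shft y) s + (t - s) / β ^ n :=
      ih (shft y)
    have h2 : phiC α β n (shft y) s ≤ phiC α β n (shft y) t := phiC_mono hb h n _
    calc phiC α β (n+1) y t = phiB α β (y 0 + phiC α β n (shft y) t) := rfl
      _ ≤ phiB α β (y 0 + phiC α β n (shft y) s)
          + ((y 0 + phiC α β n (shft y) t) - (y 0 + phiC α β n (shft y) s)) / β :=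
        phiB_lip hb (by linarith)
      _ ≤ phiB α β (y 0 + phiC α β n (shft y) s) + (t - s) / β ^ (n+1) := by
        have hd : (y 0 + phiC α β n (shft y) t) - (y 0 + phiC α β n (shft y) s)
            ≤ (t - s) / β ^ n := by linarith
        have : ((y 0:ℝ) + phiC α β n (shft y) t - (y 0 + phiC α β n (shft y) s)) / β
            ≤ ((t - s) / β ^ n) / β := by gcongr
        have he : ((t - s) / β ^ n) / β = (t - s) / β ^ (n+1) := by
          rw [div_div, pow_succ]
        linarith [this, he ▸ this]
      _ = phiC α β (n+1) y s + (t - s) / β ^ (n+1) := rfl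

lemma phiBN_eq_phiC : ∀ n (y : ℕ → ℕ), phiBN α β n y = phiC α β n y 0 := by
  intro n
  induction n with
  | zero => intro y; rfl
  | succ n ih => intro y; show phiB _ _ _ = phiB _ _ _; rw [ih (shft y)]

lemma phiBN_nonneg (hb : 0 < β) : ∀ n (y : ℕ → ℕ), 0 ≤ phiBN α β n y := by
  intro n
  cases n with
  | zero => intro y; exact le_rfl
  | succ n => intro y; exact phiB_nonneg hb _

lemma phiBN_le_one (hb : 0 < β) : ∀ n (y : ℕ → ℕ), phiBN α β n y ≤ 1 := by
  intro n
  cases n with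
  | zero => intro y; exact zero_le_one
  | succ n => intro y; exact phiB_le_one hb _

lemma phiBN_split : ∀ m n (y : ℕ → ℕ),
    phiBN α β (m + n) y = phiC α β m y (phiBN α β n (shft^[m] y)) := by
  intro m
  induction m with
  | zero => intro n y; simp [phiC]
  | succ m ih =>
    intro n y
    rw [Nat.succ_add]
    show phiB α β (y 0 + phiBN α β (m + n) (shft y)) = _
    rw [ih n (shft y)]
    show phiB α β (y 0 + phiC α β m (shft y) (phiBN α β n (shft^[m] (shft y))))
      = phiB α β (y 0 + phiC α β m (shft y) (phiBN α β n (shft^[m+1] y)))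
    rw [← Function.iterate_succ_apply]

lemma phiBN_le_phiBN (hb : 0 < β) {m n : ℕ} (h : m ≤ n) (y : ℕ → ℕ) :
    phiBN α β m y ≤ phiBN α β n y := by
  obtain ⟨j, rfl⟩ := Nat.exists_eq_add_of_le h
  rw [phiBN_split, phiBN_eq_phiC]
  exact phiC_mono hb (phiBN_nonneg hb j _) m y

lemma le_phiBInf (hb : 0 < β) (n : ℕ) (y : ℕ → ℕ) : phiBN α β n y ≤ phiBInf α β y :=
  le_ciSup (f := fun n => phiBN α β n y)
    ⟨1, by rintro x ⟨m, rfl⟩; exact phiBN_le_one hb m y⟩ n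

lemma phiBInf_nonneg (hb : 0 < β) (y : ℕ → ℕ) : 0 ≤ phiBInf α β y :=
  le_phiBInf hb 0 y

lemma phiBInf_le_one (hb : 0 < β) (y : ℕ → ℕ) : phiBInf α β y ≤ 1 :=
  ciSup_le fun n => phiBN_le_one hb n y

lemma phiBInf_le_add (hb : 0 < β) (n : ℕ) (y : ℕ → ℕ) :
    phiBInf α β y ≤ phiBN α β n y + (β⁻¹) ^ n := by
  apply ciSup_le
  intro m
  rcases le_total m n with h | h
  · exact (phiBN_le_phiBN hb h y).trans (le_add_of_nonneg_right (by positivity))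
  · obtain ⟨j, rfl⟩ := Nat.exists_eq_add_of_le h
    rw [phiBN_split, phiBN_eq_phiC]
    rw [← phiBN_eq_phiC]
    have h1 : phiC α β n y (phiBN α β j (shft^[n] y))
        ≤ phiC α β n y 0 + (phiBN α β j (shft^[n] y) - 0) / β ^ n :=
      phiC_lip hb (phiBN_nonneg hb j _) n y
    have h1' : phiC α β n y 0 = phiBN α β n y := (phiBN_eq_phiC n y).symm
    have h2 : (phiBN α β j (shft^[n] y) - 0) / β ^ n ≤ (β⁻¹) ^ n := by
      rw [sub_zero, inv_pow, ← one_div]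
      exact (div_le_div_iff_of_pos_right (by positivity)).2 (phiBN_le_one hb j _)
    linarith

lemma le_of_forall_le_add_pow (hβ : 1 < β) {a b : ℝ}
    (h : ∀ n : ℕ, a ≤ b + (β⁻¹) ^ n) : a ≤ b := by
  by_contra hc
  push_neg at hc
  obtain ⟨n, hn⟩ := exists_pow_lt_of_lt_one (sub_pos.2 hc) (inv_lt_one_of_one_lt₀ hβ)
  linarith [h n]

lemma phiBInf_rec (hβ : 1 < β) (y : ℕ → ℕ) :
    phiBInf α β y = phiB α β (y 0 + phiBInf α β (shft y)) := by
  have hb : 0 < β := lt_trans zero_lt_one hβ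
  apply le_antisymm
  · apply ciSup_le
    intro n
    cases n with
    | zero => exact phiB_nonneg hb _
    | succ n =>
      show phiB α β (y 0 + phiBN α β n (shft y)) ≤ _
      exact phiB_mono hb (by linarith [le_phiBInf (α := α) hb n (shft y)])
  · apply le_of_forall_le_add_pow hβ
    intro n
    have h1 : phiBInf α β (shft y) ≤ phiBN α β n (shft y) + (β⁻¹) ^ n :=
      phiBInf_le_add hb n (shft y)
    have h0 : phiBN α β n (shft y) ≤ phiBInf α β (shft y) := le_phiBInf hb n (shft y)
    have h2 : phiB α β (y 0 + phiBInf α β (shft y))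
        ≤ phiB α β (y 0 + phiBN α β n (shft y))
          + ((y 0 + phiBInf α β (shft y)) - (y 0 + phiBN α β n (shft y))) / β :=
      phiB_lip hb (by linarith)
    have h3 : ((y 0:ℝ) + phiBInf α β (shft y) - (y 0 + phiBN α β n (shft y))) / β
        ≤ (β⁻¹) ^ n / β := by gcongr <;> linarith
    have h4 : phiB α β (y 0 + phiBN α β n (shft y)) = phiBN α β (n+1) y := rfl
    have h5 : phiBN α β (n+1) y ≤ phiBInf α β y := le_phiBInf hb (n+1) y
    have h6 : (β⁻¹) ^ n / β ≤ (β⁻¹) ^ n :=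
      div_le_self (by positivity) hβ.le
    linarith

lemma phiBInf_split (hβ : 1 < β) : ∀ (m : ℕ) (y : ℕ → ℕ),
    phiBInf α β y = phiC α β m y (phiBInf α β (shft^[m] y)) := by
  intro m
  induction m with
  | zero => intro y; rfl
  | succ m ih =>
    intro y
    rw [phiBInf_rec hβ y, ih (shft y)]
    show phiB α β (y 0 + phiC α β m (shft y) (phiBInf α β (shft^[m] (shft y)))) = _
    rw [← Function.iterate_succ_apply]
    rfl

end Aux2

noncomputable def itL (α β z : ℝ) : ℕ → ℕ := fun n => (⌊β * (Tlow α β)^[n] z + α⌋).toNat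
noncomputable def itU (α β z : ℝ) : ℕ → ℕ := fun n => (⌈β * (Thigh α β)^[n] z + α⌉ - 1).toNat

section Aux3
variable {α β : ℝ}

lemma toNat_cast_real {a : ℤ} (h : 0 ≤ a) : ((a.toNat : ℕ) : ℝ) = (a : ℝ) := by
  exact_mod_cast Int.toNat_of_nonneg h

lemma uItin_eq_itL : uItin α β = itL α β 0 := rfl
lemma vItin_eq_itU : vItin α β = itU α β 1 := rfl

lemma Tlow_nonneg (z : ℝ) : 0 ≤ Tlow α β z := by
  have := Int.floor_le (β * z + α); unfold Tlow; linarith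

lemma Tlow_lt_one (z : ℝ) : Tlow α β z < 1 := by
  have := Int.lt_floor_add_one (β * z + α); unfold Tlow; linarith

lemma Thigh_pos (z : ℝ) : 0 < Thigh α β z := by
  have := Int.ceil_lt_add_one (β * z + α); unfold Thigh; linarith

lemma Thigh_le_one (z : ℝ) : Thigh α β z ≤ 1 := by
  have := Int.le_ceil (β * z + α); unfold Thigh; linarith

lemma Tlow_iter_nonneg {z : ℝ} (hz : 0 ≤ z) (n : ℕ) : 0 ≤ (Tlow α β)^[n] z := by
  cases n with
  | zero => exact hz
  | succ n => rw [Function.iterate_succ_apply']; exact Tlow_nonneg _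

lemma Tlow_iter_lt_one {z : ℝ} (hz : z < 1) (n : ℕ) : (Tlow α β)^[n] z < 1 := by
  cases n with
  | zero => exact hz
  | succ n => rw [Function.iterate_succ_apply']; exact Tlow_lt_one _

lemma Thigh_iter_pos {z : ℝ} (hz : 0 < z) (n : ℕ) : 0 < (Thigh α β)^[n] z := by
  cases n with
  | zero => exact hz
  | succ n => rw [Function.iterate_succ_apply']; exact Thigh_pos _

lemma Thigh_iter_le_one {z : ℝ} (hz : z ≤ 1) (n : ℕ) : (Thigh α β)^[n] z ≤ 1 := by
  cases n with
  | zero => exact hz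
  | succ n => rw [Function.iterate_succ_apply']; exact Thigh_le_one _

lemma itL_real (hα0 : 0 ≤ α) (hb : 0 < β) {z : ℝ} (hz : 0 ≤ z) (n : ℕ) :
    ((itL α β z n : ℕ) : ℝ) = (⌊β * (Tlow α β)^[n] z + α⌋ : ℤ) := by
  apply toNat_cast_real
  apply Int.floor_nonneg.2
  have := Tlow_iter_nonneg (α := α) (β := β) hz n
  nlinarith

lemma itU_real (hα0 : 0 ≤ α) (hb : 0 < β) {z : ℝ} (hz : 0 < z) (n : ℕ) :
    ((itU α β z n : ℕ) : ℝ) = (⌈β * (Thigh α β)^[n] z + α⌉ : ℤ) - 1 := by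
  have h1 : (0:ℝ) < β * (Thigh α β)^[n] z + α := by
    have := Thigh_iter_pos (α := α) (β := β) hz n
    nlinarith
  have h2 : (1:ℤ) ≤ ⌈β * (Thigh α β)^[n] z + α⌉ := Int.ceil_pos.2 h1
  have := toNat_cast_real (a := ⌈β * (Thigh α β)^[n] z + α⌉ - 1) (by omega)
  rw [itU]
  push_cast at this ⊢
  linarith

lemma Tlow_iter_succ (hα0 : 0 ≤ α) (hb : 0 < β) {z : ℝ} (hz : 0 ≤ z) (n : ℕ) :
    (Tlow α β)^[n+1] z = β * (Tlow α β)^[n] z + α - ((itL α β z n : ℕ) : ℝ) := by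
  rw [Function.iterate_succ_apply', itL_real hα0 hb hz n]
  rfl

lemma Thigh_iter_succ (hα0 : 0 ≤ α) (hb : 0 < β) {z : ℝ} (hz : 0 < z) (n : ℕ) :
    (Thigh α β)^[n+1] z = β * (Thigh α β)^[n] z + α - ((itU α β z n : ℕ) : ℝ) := by
  rw [Function.iterate_succ_apply', itU_real hα0 hb hz n]
  show β * _ + α + 1 - _ = _
  push_cast
  ring

lemma itL_shift (z : ℝ) (m : ℕ) : shft^[m] (itL α β z) = itL α β ((Tlow α β)^[m] z) := by
  funext n
  rw [shft_iterate_apply]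
  show (⌊β * (Tlow α β)^[n+m] z + α⌋).toNat = (⌊β * (Tlow α β)^[n] ((Tlow α β)^[m] z) + α⌋).toNat
  rw [Function.iterate_add_apply]

lemma itU_shift (z : ℝ) (m : ℕ) : shft^[m] (itU α β z) = itU α β ((Thigh α β)^[m] z) := by
  funext n
  rw [shft_iterate_apply]
  show (⌈β * (Thigh α β)^[n+m] z + α⌉ - 1).toNat = (⌈β * (Thigh α β)^[n] ((Thigh α β)^[m] z) + α⌉ - 1).toNat
  rw [Function.iterate_add_apply]

-- difference scaling lemmas
lemma lowlow_diff (hα0 : 0 ≤ α) (hb : 0 < β) {y z : ℝ} (hy : 0 ≤ y) (hz : 0 ≤ z) :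
    ∀ m, (∀ i, i < m → itL α β y i = itL α β z i) →
    (Tlow α β)^[m] z - (Tlow α β)^[m] y = β ^ m * (z - y) := by
  intro m
  induction m with
  | zero => intro _; simp
  | succ m ih =>
    intro h
    have hm := ih (fun i hi => h i (by omega))
    rw [Tlow_iter_succ hα0 hb hy m, Tlow_iter_succ hα0 hb hz m, h m (by omega), pow_succ]
    ring_nf
    nlinarith [hm]

lemma lowhigh_diff (hα0 : 0 ≤ α) (hb : 0 < β) {y z : ℝ} (hy : 0 ≤ y) (hz : 0 < z) :
    ∀ m, (∀ i, i < m → itL α β y i = itU α β z i) →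
    (Thigh α β)^[m] z - (Tlow α β)^[m] y = β ^ m * (z - y) := by
  intro m
  induction m with
  | zero => intro _; simp
  | succ m ih =>
    intro h
    have hm := ih (fun i hi => h i (by omega))
    rw [Tlow_iter_succ hα0 hb hy m, Thigh_iter_succ hα0 hb hz m, h m (by omega), pow_succ]
    nlinarith [hm]

lemma highhigh_diff (hα0 : 0 ≤ α) (hb : 0 < β) {y z : ℝ} (hy : 0 < y) (hz : 0 < z) :
    ∀ m, (∀ i, i < m → itU α β y i = itU α β z i) →
    (Thigh α β)^[m] z - (Thigh α β)^[m] y = β ^ m * (z - y) := by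
  intro m
  induction m with
  | zero => intro _; simp
  | succ m ih =>
    intro h
    have hm := ih (fun i hi => h i (by omega))
    rw [Thigh_iter_succ hα0 hb hy m, Thigh_iter_succ hα0 hb hz m, h m (by omega), pow_succ]
    nlinarith [hm]

lemma cmp_lt (hα0 : 0 ≤ α) (hβ : 1 < β) {y z : ℝ} (hy0 : 0 ≤ y) (hyz : y < z)
    (hz1 : z ≤ 1) : lexLt (itL α β y) (itU α β z) := by
  have hb : 0 < β := lt_trans zero_lt_one hβ
  have hz0 : 0 < z := lt_of_le_of_lt hy0 hyz
  have hex : ∃ m, itL α β y m ≠ itU α β z m := by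
    by_contra hc
    push_neg at hc
    obtain ⟨n, hn⟩ := pow_unbounded_of_one_lt ((z - y)⁻¹) hβ
    have hd := lowhigh_diff hα0 hb hy0 hz0 n (fun i _ => hc i)
    have h1 : (Thigh α β)^[n] z ≤ 1 := Thigh_iter_le_one hz1 n
    have h2 : 0 ≤ (Tlow α β)^[n] y := Tlow_iter_nonneg hy0 n
    have h3 : (1:ℝ) < β ^ n * (z - y) := by
      rw [← inv_mul_cancel₀ (by linarith : z - y ≠ 0)]
      apply mul_lt_mul_of_pos_right hn (by linarith)
    linarith
  obtain hm := Nat.find_spec hex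
  set m := Nat.find hex with hmdef
  have hmin : ∀ i, i < m → itL α β y i = itU α β z i := fun i hi =>
    not_not.1 (Nat.find_min hex hi)
  refine ⟨m, hmin, ?_⟩
  have hd := lowhigh_diff hα0 hb hy0 hz0 m hmin
  have hlt : (Tlow α β)^[m] y < (Thigh α β)^[m] z := by nlinarith [pow_pos hb m]
  have hfc : (⌊β * (Tlow α β)^[m] y + α⌋ : ℤ) < ⌈β * (Thigh α β)^[m] z + α⌉ := by
    have h1 : (⌊β * (Tlow α β)^[m] y + α⌋ : ℝ) ≤ β * (Tlow α β)^[m] y + α :=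
      Int.floor_le _
    have h2 : (β * (Thigh α β)^[m] z + α : ℝ) ≤ ⌈β * (Thigh α β)^[m] z + α⌉ :=
      Int.le_ceil _
    have : ((⌊β * (Tlow α β)^[m] y + α⌋ : ℤ) : ℝ) < ((⌈β * (Thigh α β)^[m] z + α⌉ : ℤ) : ℝ) := by
      nlinarith
    exact_mod_cast this
  have hle : itL α β y m ≤ itU α β z m := by
    show (⌊β * (Tlow α β)^[m] y + α⌋).toNat ≤ (⌈β * (Thigh α β)^[m] z + α⌉ - 1).toNat
    apply Int.toNat_le_toNat
    omega
  exact lt_of_le_of_ne hle hm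

lemma cmp_leL (hα0 : 0 ≤ α) (hβ : 1 < β) {y z : ℝ} (hy : 0 ≤ y) (hyz : y ≤ z) :
    lexLe (itL α β y) (itL α β z) := by
  have hb : 0 < β := lt_trans zero_lt_one hβ
  have hz : 0 ≤ z := hy.trans hyz
  by_cases heq : itL α β y = itL α β z
  · exact Or.inl heq
  · right
    have hex : ∃ m, itL α β y m ≠ itL α β z m := Function.ne_iff.1 heq
    obtain hm := Nat.find_spec hex
    set m := Nat.find hex
    have hmin : ∀ i, i < m → itL α β y i = itL α β z i := fun i hi =>
      not_not.1 (Nat.find_min hex hi)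
    refine ⟨m, hmin, ?_⟩
    have hd := lowlow_diff hα0 hb hy hz m hmin
    have hlt : (Tlow α β)^[m] y ≤ (Tlow α β)^[m] z := by nlinarith [pow_pos hb m]
    have hfc : (⌊β * (Tlow α β)^[m] y + α⌋ : ℤ) ≤ ⌊β * (Tlow α β)^[m] z + α⌋ :=
      Int.floor_le_floor (by nlinarith)
    have hle : itL α β y m ≤ itL α β z m := Int.toNat_le_toNat hfc
    exact lt_of_le_of_ne hle hm

lemma cmp_leU (hα0 : 0 ≤ α) (hβ : 1 < β) {y z : ℝ} (hy : 0 < y) (hyz : y ≤ z) :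
    lexLe (itU α β y) (itU α β z) := by
  have hb : 0 < β := lt_trans zero_lt_one hβ
  have hz : 0 < z := lt_of_lt_of_le hy hyz
  by_cases heq : itU α β y = itU α β z
  · exact Or.inl heq
  · right
    have hex : ∃ m, itU α β y m ≠ itU α β z m := Function.ne_iff.1 heq
    obtain hm := Nat.find_spec hex
    set m := Nat.find hex
    have hmin : ∀ i, i < m → itU α β y i = itU α β z i := fun i hi =>
      not_not.1 (Nat.find_min hex hi)
    refine ⟨m, hmin, ?_⟩
    have hd := highhigh_diff hα0 hb hy hz m hmin
    have hlt : (Thigh α β)^[m] y ≤ (Thigh α β)^[m] z := by nlinarith [pow_pos hb m]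
    have hfc : (⌈β * (Thigh α β)^[m] y + α⌉ : ℤ) ≤ ⌈β * (Thigh α β)^[m] z + α⌉ :=
      Int.ceil_le_ceil (by nlinarith)
    have hle : itU α β y m ≤ itU α β z m := Int.toNat_le_toNat (by omega)
    exact lt_of_le_of_ne hle hm

end Aux3

section Aux4
variable {α β : ℝ} (hα0 : 0 ≤ α) (hα1 : α < 1) (hβ : 1 < β)
include hα0 hα1 hβ

lemma k_facts : α + β ≤ (kAB α β : ℝ) ∧ ((kAB α β : ℝ) < α + β + 1) ∧ 2 ≤ kAB α β := by
  have h1 : (1:ℝ) < α + β := by linarith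
  have h2 : (0:ℤ) ≤ ⌈α + β⌉ := by
    apply Int.ceil_nonneg; linarith
  have hk : ((kAB α β : ℕ) : ℝ) = (⌈α + β⌉ : ℤ) := toNat_cast_real h2
  refine ⟨by rw [hk]; exact Int.le_ceil _, by rw [hk]; exact_mod_cast Int.ceil_lt_add_one _, ?_⟩
  have h3 : (1:ℤ) < ⌈α + β⌉ := by
    rw [Int.lt_ceil]; push_cast; linarith
  show 2 ≤ (⌈α + β⌉).toNat
  omega

lemma I_bounds {j : ℕ} {s : ℝ} (hj : j < kAB α β) (hs : s ∈ IAB α β j) :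
    ((j:ℝ) < β * s + α ∧ β * s + α < (j:ℝ) + 1) ∧ (0 < s ∧ s < 1) := by
  obtain ⟨hk1, hk2, hk3⟩ := k_facts hα0 hα1 hβ
  have hb : 0 < β := lt_trans zero_lt_one hβ
  obtain ⟨hl, hr⟩ := hs
  have hs1 : s < 1 := by
    by_cases hjk : j + 1 = kAB α β
    · rw [ptAB, if_neg (by omega), if_pos hjk] at hr; exact hr
    · rw [ptAB, if_neg (by omega), if_neg hjk] at hr
      have hj2 : (j:ℝ) + 1 ≤ (kAB α β : ℝ) - 1 := by
        have : j + 2 ≤ kAB α β := by omega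
        have := (Nat.cast_le (α := ℝ)).2 this
        push_cast at this ⊢
        linarith
      have : ((j:ℝ) + 1 - α) / β < 1 := by
        rw [div_lt_one hb]; linarith
      calc s < ((j:ℝ) + 1 - α) / β := by exact_mod_cast hr
        _ < 1 := this
  have hs0 : 0 < s := by
    by_cases hj0 : j = 0
    · rw [ptAB, if_pos hj0] at hl; exact hl
    · rw [ptAB, if_neg hj0, if_neg (by omega)] at hl
      have h1j : (1:ℝ) ≤ (j:ℝ) := by exact_mod_cast Nat.one_le_iff_ne_zero.2 hj0
      have : 0 < ((j:ℝ) - α) / β := div_pos (by linarith) hb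
      linarith
  refine ⟨⟨?_, ?_⟩, hs0, hs1⟩
  · by_cases hj0 : j = 0
    · subst hj0; push_cast; nlinarith
    · rw [ptAB, if_neg hj0, if_neg (by omega)] at hl
      rw [div_lt_iff₀ hb] at hl
      linarith
  · by_cases hjk : j + 1 = kAB α β
    · have : (j:ℝ) + 1 = (kAB α β : ℝ) := by exact_mod_cast hjk
      nlinarith
    · rw [ptAB, if_neg (by omega), if_neg hjk] at hr
      rw [lt_div_iff₀ hb] at hr
      push_cast at hr ⊢
      linarith

lemma I_of_floor {j : ℕ} {s : ℝ} (hj : j < kAB α β) (h1 : (j:ℝ) < β * s + α)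
    (h2 : β * s + α < (j:ℝ) + 1) (hs0 : 0 < s) (hs1 : s < 1) : s ∈ IAB α β j := by
  have hb : 0 < β := lt_trans zero_lt_one hβ
  constructor
  · by_cases hj0 : j = 0
    · rw [ptAB, if_pos hj0]; exact hs0
    · rw [ptAB, if_neg hj0, if_neg (by omega)]
      rw [div_lt_iff₀ hb]; linarith
  · by_cases hjk : j + 1 = kAB α β
    · rw [ptAB, if_neg (by omega), if_pos hjk]; exact hs1
    · rw [ptAB, if_neg (by omega), if_neg hjk]
      rw [lt_div_iff₀ hb]; push_cast; linarith

lemma I_unique {j j' : ℕ} {s : ℝ} (hj : j < kAB α β) (hj' : j' < kAB α β)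
    (hs : s ∈ IAB α β j) (hs' : s ∈ IAB α β j') : j = j' := by
  obtain ⟨⟨a1, a2⟩, _⟩ := I_bounds hα0 hα1 hβ hj hs
  obtain ⟨⟨b1, b2⟩, _⟩ := I_bounds hα0 hα1 hβ hj' hs'
  have c1 : (j:ℝ) < (j':ℝ) + 1 := by linarith
  have c2 : (j':ℝ) < (j:ℝ) + 1 := by linarith
  have d1 : j < j' + 1 := by exact_mod_cast c1
  have d2 : j' < j + 1 := by exact_mod_cast c2
  omega

lemma TAB_eval {j : ℕ} {s : ℝ} (hj : j < kAB α β) (hs : s ∈ IAB α β j) :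
    TAB α β s = β * s + α - (j:ℝ) := by
  have hex : ∃ j', j' < kAB α β ∧ s ∈ IAB α β j' := ⟨j, hj, hs⟩
  rw [TAB, dif_pos hex]
  have : hex.choose = j :=
    I_unique hα0 hα1 hβ hex.choose_spec.1 hj hex.choose_spec.2 hs
  rw [this]

lemma codeAB_eval {j n : ℕ} {x : ℝ} (hj : j < kAB α β) (hs : (TAB α β)^[n] x ∈ IAB α β j) :
    codeAB α β x n = j := by
  have hex : ∃ j', j' < kAB α β ∧ (TAB α β)^[n] x ∈ IAB α β j' := ⟨j, hj, hs⟩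
  rw [codeAB]
  rw [dif_pos hex]
  exact I_unique hα0 hα1 hβ hex.choose_spec.1 hj hex.choose_spec.2 hs

lemma TAB_mem_Ioo {j : ℕ} {s : ℝ} (hj : j < kAB α β) (hs : s ∈ IAB α β j) :
    TAB α β s ∈ Set.Ioo (0:ℝ) 1 := by
  rw [TAB_eval hα0 hα1 hβ hj hs]
  obtain ⟨⟨a1, a2⟩, _⟩ := I_bounds hα0 hα1 hβ hj hs
  constructor <;> linarith

lemma notS0_of_memI {j : ℕ} {s : ℝ} (hj : j < kAB α β) (hs : s ∈ IAB α β j) :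
    s ∉ S0AB α β := by
  obtain ⟨⟨a1, a2⟩, hs0, hs1⟩ := I_bounds hα0 hα1 hβ hj hs
  obtain ⟨_, _, hk3⟩ := k_facts hα0 hα1 hβ
  have hb : 0 < β := lt_trans zero_lt_one hβ
  rintro ⟨i, hik, hpt⟩
  by_cases hi0 : i = 0
  · rw [hpt, ptAB, if_pos hi0] at hs0; exact lt_irrefl _ hs0
  by_cases hik' : i = kAB α β
  · rw [hpt, ptAB, if_neg hi0, if_pos hik'] at hs1; exact lt_irrefl _ hs1
  rw [hpt, ptAB, if_neg hi0, if_neg hik'] at a1 a2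
  rw [mul_div_assoc'] at a1 a2
  rw [mul_comm, mul_div_assoc] at a1 a2
  rw [div_self hb.ne', mul_one] at a1 a2
  have d1 : (j:ℝ) < (i:ℝ) := by linarith
  have d2 : (i:ℝ) < (j:ℝ) + 1 := by linarith
  have e1 : j < i := by exact_mod_cast d1
  have e2 : i < j + 1 := by exact_mod_cast d2
  omega

lemma coverage {s : ℝ} (hs : s ∈ Set.Icc (0:ℝ) 1) (hns : s ∉ S0AB α β) :
    ∃ j, j < kAB α β ∧ s ∈ IAB α β j := by
  obtain ⟨hk1, hk2, hk3⟩ := k_facts hα0 hα1 hβ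
  have hb : 0 < β := lt_trans zero_lt_one hβ
  have hs0 : 0 < s := by
    rcases eq_or_lt_of_le hs.1 with h | h
    · exact absurd ⟨0, by omega, by rw [ptAB, if_pos rfl]; exact h.symm⟩ hns
    · exact h
  have hs1 : s < 1 := by
    rcases eq_or_lt_of_le hs.2 with h | h
    · exact absurd ⟨kAB α β, le_rfl, by rw [ptAB, if_neg (by omega), if_pos rfl]; exact h⟩ hns
    · exact h
  set w := β * s + α with hw
  have hwl : α < w := by nlinarith
  have hwu : w < α + β := by nlinarith
  have hfnn : (0:ℤ) ≤ ⌊w⌋ := Int.floor_nonneg.2 (by nlinarith)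
  rcases eq_or_lt_of_le (Int.floor_le w) with hfl | hfl
  · exfalso
    set m := ⌊w⌋ with hm
    have hm1 : (0:ℤ) < m := by
      have : (0:ℝ) < (m:ℝ) := by rw [hfl]; linarith
      exact_mod_cast this
    have hmk : m < (kAB α β : ℤ) := by
      have : (m:ℝ) < ((kAB α β : ℕ) : ℝ) := by rw [hfl]; linarith
      exact_mod_cast this
    set i := m.toNat with hi
    have hir : ((i:ℕ) : ℝ) = (m : ℝ) := toNat_cast_real hm1.le
    have hi0 : i ≠ 0 := by omega
    have hik : i ≠ kAB α β := by omega
    apply hns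
    refine ⟨i, by omega, ?_⟩
    rw [ptAB, if_neg hi0, if_neg hik, hir, hfl]
    rw [hw]
    field_simp
    ring
  · set j := (⌊w⌋).toNat with hj
    have hjr : ((j:ℕ) : ℝ) = ((⌊w⌋ : ℤ) : ℝ) := toNat_cast_real hfnn
    have h1 : (j:ℝ) < w := by rw [hjr]; exact hfl
    have h2 : w < (j:ℝ) + 1 := by rw [hjr]; exact Int.lt_floor_add_one w
    have hjk : j < kAB α β := by
      have : (j:ℝ) < (kAB α β : ℝ) := by linarith
      exact_mod_cast this
    exact ⟨j, hjk, I_of_floor hα0 hα1 hβ hjk h1 h2 hs0 hs1⟩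

end Aux4

section Aux5
variable {α β : ℝ} (hα0 : 0 ≤ α) (hα1 : α < 1) (hβ : 1 < β)
include hα0 hα1 hβ

/-- A point is *good* if each iterate lies in some branch interval. -/
def Good (α β x : ℝ) : Prop := ∀ n, ∃ j, j < kAB α β ∧ (TAB α β)^[n] x ∈ IAB α β j

omit hα0 hα1 hβ in
lemma good_def {x : ℝ} (hg : Good α β x) (n : ℕ) :
    ∃ j, j < kAB α β ∧ (TAB α β)^[n] x ∈ IAB α β j := hg n

lemma good_of_mem {x : ℝ} (hx : x ∈ Set.Icc (0:ℝ) 1 \ SAB α β) : Good α β x := by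
  have key : ∀ n, (TAB α β)^[n] x ∈ Set.Icc (0:ℝ) 1 ∧
      ∀ i, i ≤ n → (TAB α β)^[i] x ∉ S0AB α β := by
    intro n
    induction n with
    | zero =>
      refine ⟨hx.1, ?_⟩
      intro i hi hS
      rw [Nat.le_zero] at hi
      subst hi
      exact hx.2 ⟨hx.1, 0, hS, fun i hi => absurd hi (by omega)⟩
    | succ n ih =>
      obtain ⟨j, hj, hm⟩ := coverage hα0 hα1 hβ ih.1 (ih.2 n le_rfl)
      constructor
      · rw [Function.iterate_succ_apply']
        exact Set.Ioo_subset_Icc_self (TAB_mem_Ioo hα0 hα1 hβ hj hm)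
      · intro i hi hS
        rcases Nat.lt_or_ge i (n+1) with h | h
        · exact ih.2 i (by omega) hS
        · have hieq : i = n + 1 := by omega
          exact hx.2 ⟨hx.1, i, hS, fun l hl => ih.2 l (by omega)⟩
  intro n
  exact coverage hα0 hα1 hβ (key n).1 ((key n).2 n le_rfl)

lemma good_shift {x : ℝ} (hg : Good α β x) : Good α β (TAB α β x) := by
  intro n
  obtain ⟨j, hj, hm⟩ := hg (n+1)
  exact ⟨j, hj, by rw [← Function.iterate_succ_apply]; exact hm⟩

lemma good_iterate {x : ℝ} (hg : Good α β x) (n : ℕ) : Good α β ((TAB α β)^[n] x) := by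
  induction n with
  | zero => exact hg
  | succ n ih =>
    rw [Function.iterate_succ_apply']
    exact good_shift hα0 hα1 hβ ih

lemma good_shft_code {x : ℝ} (hg : Good α β x) :
    shft (codeAB α β x) = codeAB α β (TAB α β x) := by
  funext n
  obtain ⟨j, hj, hm⟩ := hg (n+1)
  have h2 : (TAB α β)^[n] (TAB α β x) ∈ IAB α β j := by
    rw [← Function.iterate_succ_apply]; exact hm
  show codeAB α β x (n+1) = codeAB α β (TAB α β x) n
  rw [codeAB_eval hα0 hα1 hβ hj hm, codeAB_eval hα0 hα1 hβ hj h2]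

lemma good_mem_I {x : ℝ} (hg : Good α β x) :
    x ∈ IAB α β (codeAB α β x 0) ∧ codeAB α β x 0 < kAB α β := by
  obtain ⟨j, hj, hm⟩ := hg 0
  rw [Function.iterate_zero_apply] at hm
  have : codeAB α β x 0 = j := codeAB_eval hα0 hα1 hβ hj (by simpa using hm)
  rw [this]
  exact ⟨hm, hj⟩

lemma good_phiB_eq {x : ℝ} (hg : Good α β x) :
    x = phiB α β ((codeAB α β x 0 : ℝ) + TAB α β x) := by
  have hb : 0 < β := lt_trans zero_lt_one hβ
  obtain ⟨hm, hj⟩ := good_mem_I hα0 hα1 hβ hg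
  set j := codeAB α β x 0
  have hT : TAB α β x = β * x + α - (j:ℝ) := TAB_eval hα0 hα1 hβ hj hm
  obtain ⟨⟨a1, a2⟩, hs0, hs1⟩ := I_bounds hα0 hα1 hβ hj hm
  have harg : (j:ℝ) + TAB α β x = β * x + α := by rw [hT]; ring
  rw [harg, phiB_eval hb (by nlinarith) (by nlinarith)]
  field_simp
  ring

lemma good_approx : ∀ n (x : ℝ), Good α β x →
    x - (β⁻¹) ^ n ≤ phiBN α β n (codeAB α β x) ∧ phiBN α β n (codeAB α β x) ≤ x := by
  have hb : 0 < β := lt_trans zero_lt_one hβ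
  intro n
  induction n with
  | zero =>
    intro x hg
    obtain ⟨hm, hj⟩ := good_mem_I hα0 hα1 hβ hg
    obtain ⟨_, hs0, hs1⟩ := I_bounds hα0 hα1 hβ hj hm
    constructor
    · show x - 1 ≤ 0; linarith
    · show (0:ℝ) ≤ x; linarith
  | succ n ih =>
    intro x hg
    have hTg : Good α β (TAB α β x) := good_shift hα0 hα1 hβ hg
    obtain ⟨ih1, ih2⟩ := ih (TAB α β x) hTg
    have hsc : shft (codeAB α β x) = codeAB α β (TAB α β x) := good_shft_code hα0 hα1 hβ hg
    have e1 : phiBN α β (n+1) (codeAB α β x)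
        = phiB α β ((codeAB α β x 0 : ℝ) + phiBN α β n (codeAB α β (TAB α β x))) := by
      show phiB α β _ = _
      rw [hsc]
    have hx := good_phiB_eq hα0 hα1 hβ hg
    constructor
    · rw [e1]
      have hlip : phiB α β ((codeAB α β x 0 : ℝ) + TAB α β x)
          ≤ phiB α β ((codeAB α β x 0 : ℝ) + phiBN α β n (codeAB α β (TAB α β x)))
            + (((codeAB α β x 0 : ℝ) + TAB α β x)
               - ((codeAB α β x 0 : ℝ) + phiBN α β n (codeAB α β (TAB α β x)))) / β :=
        phiB_lip hb (by linarith)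
      have hd : (((codeAB α β x 0 : ℝ) + TAB α β x)
          - ((codeAB α β x 0 : ℝ) + phiBN α β n (codeAB α β (TAB α β x)))) / β
          ≤ (β⁻¹) ^ n / β := by gcongr; linarith
      have he : (β⁻¹) ^ n / β = (β⁻¹) ^ (n+1) := by
        rw [pow_succ, div_eq_mul_inv]
      linarith [hx ▸ hlip]
    · rw [e1]
      calc phiB α β ((codeAB α β x 0 : ℝ) + phiBN α β n (codeAB α β (TAB α β x)))
          ≤ phiB α β ((codeAB α β x 0 : ℝ) + TAB α β x) := phiB_mono hb (by linarith)
        _ = x := hx.symm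

lemma good_tendsto {x : ℝ} (hg : Good α β x) :
    Filter.Tendsto (fun n => phiBN α β n (codeAB α β x)) Filter.atTop (nhds x) := by
  have hb : 0 < β := lt_trans zero_lt_one hβ
  have hpow : Filter.Tendsto (fun n : ℕ => (β⁻¹) ^ n) Filter.atTop (nhds 0) :=
    tendsto_pow_atTop_nhds_zero_of_lt_one (by positivity) (inv_lt_one_of_one_lt₀ hβ)
  have hlo : Filter.Tendsto (fun n : ℕ => x - (β⁻¹) ^ n) Filter.atTop (nhds x) := by
    have := (tendsto_const_nhds (x := x) (f := Filter.atTop (α := ℕ))).sub hpow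
    simpa using this
  apply tendsto_of_tendsto_of_tendsto_of_le_of_le hlo tendsto_const_nhds
  · intro n; exact (good_approx hα0 hα1 hβ n x hg).1
  · intro n; exact (good_approx hα0 hα1 hβ n x hg).2

lemma good_T_eq {x : ℝ} (hg : Good α β x) :
    TAB α β x = Tlow α β x ∧ TAB α β x = Thigh α β x ∧
    (⌊β * x + α⌋ : ℤ) = (codeAB α β x 0 : ℕ) ∧
    (⌈β * x + α⌉ : ℤ) = (codeAB α β x 0 : ℕ) + 1 := by
  obtain ⟨hm, hj⟩ := good_mem_I hα0 hα1 hβ hg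
  set j := codeAB α β x 0
  have hT : TAB α β x = β * x + α - (j:ℝ) := TAB_eval hα0 hα1 hβ hj hm
  obtain ⟨⟨a1, a2⟩, hs0, hs1⟩ := I_bounds hα0 hα1 hβ hj hm
  have hfl : (⌊β * x + α⌋ : ℤ) = (j : ℕ) := by
    apply Int.floor_eq_iff.2
    constructor
    · push_cast; linarith
    · push_cast; linarith
  have hcl : (⌈β * x + α⌉ : ℤ) = (j : ℕ) + 1 := by
    apply Int.ceil_eq_iff.2
    constructor
    · push_cast; linarith
    · push_cast; linarith
  refine ⟨?_, ?_, hfl, hcl⟩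
  · rw [Tlow, hfl, hT]; push_cast; ring
  · rw [Thigh, hcl, hT]; push_cast; ring

lemma good_iter_eq {x : ℝ} (hg : Good α β x) (n : ℕ) :
    (TAB α β)^[n] x = (Tlow α β)^[n] x ∧ (TAB α β)^[n] x = (Thigh α β)^[n] x := by
  induction n with
  | zero => exact ⟨rfl, rfl⟩
  | succ n ih =>
    have hgi := good_iterate hα0 hα1 hβ hg n
    obtain ⟨e1, e2, _, _⟩ := good_T_eq hα0 hα1 hβ hgi
    constructor
    · rw [Function.iterate_succ_apply', Function.iterate_succ_apply', ← ih.1, ← e1]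
    · rw [Function.iterate_succ_apply', Function.iterate_succ_apply', ← ih.2, ← e2]

lemma good_shft_code_iter {x : ℝ} (hg : Good α β x) (n : ℕ) :
    shft^[n] (codeAB α β x) = codeAB α β ((TAB α β)^[n] x) := by
  induction n with
  | zero => rfl
  | succ n ih =>
    rw [Function.iterate_succ_apply', ih, Function.iterate_succ_apply']
    exact good_shft_code hα0 hα1 hβ (good_iterate hα0 hα1 hβ hg n)

lemma good_code_itL {x : ℝ} (hg : Good α β x) :
    codeAB α β x = itL α β x ∧ codeAB α β x = itU α β x := by
  have h0 : ∀ n, codeAB α β ((TAB α β)^[n] x) 0 = codeAB α β x n := by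
    intro n
    have := congrFun (good_shft_code_iter hα0 hα1 hβ hg n) 0
    rw [shft_iterate_apply] at this
    simpa using this.symm
  constructor <;> funext n
  · have hfl := (good_T_eq hα0 hα1 hβ (good_iterate hα0 hα1 hβ hg n)).2.2.1
    rw [h0 n] at hfl
    show codeAB α β x n = (⌊β * (Tlow α β)^[n] x + α⌋).toNat
    rw [← (good_iter_eq hα0 hα1 hβ hg n).1, hfl]
    simp
  · have hcl := (good_T_eq hα0 hα1 hβ (good_iterate hα0 hα1 hβ hg n)).2.2.2
    rw [h0 n] at hcl
    show codeAB α β x n = (⌈β * (Thigh α β)^[n] x + α⌉ - 1).toNat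
    rw [← (good_iter_eq hα0 hα1 hβ hg n).2, hcl]
    simp

end Aux5

section Aux6
variable {α β : ℝ} (hα0 : 0 ≤ α) (hα1 : α < 1) (hβ : 1 < β)
include hα0 hα1 hβ

lemma itL_shift_one (z : ℝ) : shft (itL α β z) = itL α β (Tlow α β z) := by
  have := itL_shift (α := α) (β := β) z 1
  simpa using this

lemma itU_shift_one (z : ℝ) : shft (itU α β z) = itU α β (Thigh α β z) := by
  have := itU_shift (α := α) (β := β) z 1
  simpa using this

lemma Qlow : ∀ (m : ℕ) (z s : ℝ), 0 ≤ z → z < 1 → (Tlow α β)^[m] z < s →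
    z < phiC α β m (itL α β z) s := by
  have hb : 0 < β := lt_trans zero_lt_one hβ
  intro m
  induction m with
  | zero =>
    intro z s _ _ hs
    simpa [phiC] using hs
  | succ m ih =>
    intro z s h0 h1 hs
    have hz0 : 0 ≤ Tlow α β z := Tlow_nonneg z
    have hz1 : Tlow α β z < 1 := Tlow_lt_one z
    have hs' : (Tlow α β)^[m] (Tlow α β z) < s := by
      rw [← Function.iterate_succ_apply]; exact hs
    have hin : Tlow α β z < phiC α β m (itL α β (Tlow α β z)) s := ih _ s hz0 hz1 hs'
    show z < phiB α β ((itL α β z 0 : ℝ) + phiC α β m (shft (itL α β z)) s)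
    rw [itL_shift_one hα0 hα1 hβ]
    set t := phiC α β m (itL α β (Tlow α β z)) s with ht
    have hfl : ((itL α β z 0 : ℕ) : ℝ) = (⌊β * z + α⌋ : ℤ) := by
      have := itL_real hα0 hb h0 0
      simpa using this
    have hkey : ((itL α β z 0 : ℕ) : ℝ) + Tlow α β z = β * z + α := by
      rw [hfl, Tlow]; ring
    rw [phiB]
    split_ifs with h1' h2'
    · exfalso
      have : α ≤ ((itL α β z 0 : ℕ) : ℝ) + Tlow α β z := by nlinarith
      linarith
    · exact h1
    · rw [lt_div_iff₀ hb]
      nlinarith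

lemma Qhigh : ∀ (m : ℕ) (z s : ℝ), 0 < z → z ≤ 1 → s < (Thigh α β)^[m] z →
    phiC α β m (itU α β z) s < z := by
  have hb : 0 < β := lt_trans zero_lt_one hβ
  intro m
  induction m with
  | zero =>
    intro z s _ _ hs
    simpa [phiC] using hs
  | succ m ih =>
    intro z s h0 h1 hs
    have hz0 : 0 < Thigh α β z := Thigh_pos z
    have hz1 : Thigh α β z ≤ 1 := Thigh_le_one z
    have hs' : s < (Thigh α β)^[m] (Thigh α β z) := by
      rw [← Function.iterate_succ_apply]; exact hs
    have hin : phiC α β m (itU α β (Thigh α β z)) s < Thigh α β z := ih _ s hz0 hz1 hs'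
    show phiB α β ((itU α β z 0 : ℝ) + phiC α β m (shft (itU α β z)) s) < z
    rw [itU_shift_one hα0 hα1 hβ]
    set t := phiC α β m (itU α β (Thigh α β z)) s with ht
    have hcl : ((itU α β z 0 : ℕ) : ℝ) = (⌈β * z + α⌉ : ℤ) - 1 := by
      have := itU_real hα0 hb h0 0
      simpa using this
    have hkey : ((itU α β z 0 : ℕ) : ℝ) + Thigh α β z = β * z + α := by
      rw [hcl, Thigh]; ring
    rw [phiB]
    split_ifs with h1' h2'
    · exact h0
    · exfalso
      have : ((itU α β z 0 : ℕ) : ℝ) + t < β * z + α := by nlinarith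
      nlinarith
    · rw [div_lt_iff₀ hb]
      nlinarith

lemma pos_of_uLt {z : ℕ → ℕ} (hz : lexLt (uItin α β) z) : 0 < phiBInf α β z := by
  have hb : 0 < β := lt_trans zero_lt_one hβ
  obtain ⟨m, hpre, hm⟩ := hz
  have e1 : phiBInf α β z = phiC α β m z (phiBInf α β (shft^[m] z)) := phiBInf_split hβ m z
  have e2 : phiC α β m z (phiBInf α β (shft^[m] z))
      = phiC α β m (uItin α β) (phiBInf α β (shft^[m] z)) :=
    phiC_congr m (fun i hi => (hpre i hi).symm)
  have e3 : phiBInf α β (shft^[m] z)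
      = phiB α β ((z m : ℝ) + phiBInf α β (shft^[m+1] z)) := by
    rw [phiBInf_rec hβ (shft^[m] z), shft_iterate_apply,
      ← Function.iterate_succ_apply' shft m z]
    norm_num
  have h4 : phiB α β ((uItin α β m : ℝ) + 1) ≤ phiBInf α β (shft^[m] z) := by
    rw [e3]
    apply phiB_mono hb
    have hc : ((uItin α β m : ℕ) : ℝ) + 1 ≤ (z m : ℝ) := by
      have : uItin α β m + 1 ≤ z m := hm
      exact_mod_cast this
    linarith [phiBInf_nonneg (α := α) hb (shft^[m+1] z)]
  have hfl : ((uItin α β m : ℕ) : ℝ) = (⌊β * (Tlow α β)^[m] 0 + α⌋ : ℤ) :=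
    itL_real hα0 hb le_rfl m
  have hT1 : (Tlow α β)^[m] (0:ℝ) < 1 := Tlow_iter_lt_one (by norm_num) m
  have hkey : (Tlow α β)^[m] (0:ℝ) < phiB α β ((uItin α β m : ℝ) + 1) := by
    have hwf : β * (Tlow α β)^[m] (0:ℝ) + α < ((uItin α β m : ℕ) : ℝ) + 1 := by
      rw [hfl]; exact Int.lt_floor_add_one _
    rw [phiB]
    split_ifs with h1' h2'
    · exfalso
      have : (0:ℝ) ≤ ((uItin α β m : ℕ) : ℝ) := Nat.cast_nonneg _
      linarith
    · exact hT1
    · rw [lt_div_iff₀ hb]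
      have := Tlow_iter_nonneg (α := α) (β := β) (le_refl (0:ℝ)) m
      nlinarith
  have hin : (Tlow α β)^[m] (0:ℝ) < phiBInf α β (shft^[m] z) := lt_of_lt_of_le hkey h4
  have := Qlow hα0 hα1 hβ m 0 (phiBInf α β (shft^[m] z)) le_rfl (by norm_num) hin
  rw [e1, e2]
  exact this

lemma lt_one_of_ltV {z : ℕ → ℕ} (hz : lexLt z (vItin α β)) : phiBInf α β z < 1 := by
  have hb : 0 < β := lt_trans zero_lt_one hβ
  obtain ⟨m, hpre, hm⟩ := hz
  have e1 : phiBInf α β z = phiC α β m z (phiBInf α β (shft^[m] z)) := phiBInf_split hβ m z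
  have e2 : phiC α β m z (phiBInf α β (shft^[m] z))
      = phiC α β m (vItin α β) (phiBInf α β (shft^[m] z)) :=
    phiC_congr m (fun i hi => hpre i hi)
  have e3 : phiBInf α β (shft^[m] z)
      = phiB α β ((z m : ℝ) + phiBInf α β (shft^[m+1] z)) := by
    rw [phiBInf_rec hβ (shft^[m] z), shft_iterate_apply,
      ← Function.iterate_succ_apply' shft m z]
    norm_num
  have h4 : phiBInf α β (shft^[m] z) ≤ phiB α β ((vItin α β m : ℝ)) := by
    rw [e3]
    apply phiB_mono hb
    have hc : (z m : ℝ) + 1 ≤ (vItin α β m : ℝ) := by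
      have : z m + 1 ≤ vItin α β m := hm
      exact_mod_cast this
    linarith [phiBInf_le_one (α := α) hb (shft^[m+1] z)]
  have hcl : ((vItin α β m : ℕ) : ℝ) = (⌈β * (Thigh α β)^[m] 1 + α⌉ : ℤ) - 1 :=
    itU_real hα0 hb one_pos m
  have hT1 : 0 < (Thigh α β)^[m] (1:ℝ) := Thigh_iter_pos one_pos m
  have hkey : phiB α β ((vItin α β m : ℝ)) < (Thigh α β)^[m] (1:ℝ) := by
    have hwf : ((vItin α β m : ℕ) : ℝ) < β * (Thigh α β)^[m] (1:ℝ) + α := by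
      rw [hcl]
      have := Int.ceil_lt_add_one (β * (Thigh α β)^[m] (1:ℝ) + α)
      linarith
    have hup : β * (Thigh α β)^[m] (1:ℝ) + α ≤ α + β := by
      have := Thigh_iter_le_one (α := α) (β := β) (le_refl (1:ℝ)) m
      nlinarith
    rw [phiB]
    split_ifs with h1' h2'
    · exact hT1
    · exfalso; linarith
    · rw [div_lt_iff₀ hb]
      linarith
  have hin : phiBInf α β (shft^[m] z) < (Thigh α β)^[m] (1:ℝ) := lt_of_le_of_lt h4 hkey
  have := Qhigh hα0 hα1 hβ m 1 (phiBInf α β (shft^[m] z)) one_pos le_rfl hin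
  rw [e1, e2]
  exact this

end Aux6

section Aux7
variable {α β : ℝ} (hα0 : 0 ≤ α) (hα1 : α < 1) (hβ : 1 < β)
include hα0 hα1 hβ

lemma admissible_realized {y : ℕ → ℕ} (hyk : ∀ i, y i < kAB α β)
    (hyu : ∀ n, lexLt (uItin α β) (shft^[n] y))
    (hyv : ∀ n, lexLt (shft^[n] y) (vItin α β)) :
    ∃ x ∈ Set.Icc (0:ℝ) 1 \ SAB α β, y = codeAB α β x := by
  have hb : 0 < β := lt_trans zero_lt_one hβ
  set s : ℕ → ℝ := fun n => phiBInf α β (shft^[n] y) with hs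
  have hpos : ∀ n, 0 < s n := fun n => pos_of_uLt hα0 hα1 hβ (hyu n)
  have hlt1 : ∀ n, s n < 1 := fun n => lt_one_of_ltV hα0 hα1 hβ (hyv n)
  have hrec : ∀ n, s n = phiB α β ((y n : ℝ) + s (n+1)) := by
    intro n
    show phiBInf α β (shft^[n] y) = _
    rw [phiBInf_rec hβ (shft^[n] y), shft_iterate_apply,
      ← Function.iterate_succ_apply' shft n y]
    simp only [hs, zero_add]
  have hw : ∀ n, β * s n + α = (y n : ℝ) + s (n+1) := by
    intro n
    have h1 : α < (y n : ℝ) + s (n+1) := by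
      by_contra hc
      push_neg at hc
      have : s n = 0 := by rw [hrec n, phiB, if_pos hc]
      linarith [hpos n]
    have h2 : (y n : ℝ) + s (n+1) < α + β := by
      by_contra hc
      push_neg at hc
      have : s n = 1 := by rw [hrec n, phiB, if_neg (not_le.2 h1), if_pos hc]
      linarith [hlt1 n]
    have h3 : s n = ((y n : ℝ) + s (n+1) - α) / β := by
      rw [hrec n, phiB_eval hb (le_of_lt h1) (le_of_lt h2)]
    rw [h3]
    field_simp
    ring
  have hmemI : ∀ n, s n ∈ IAB α β (y n) := by
    intro n
    apply I_of_floor hα0 hα1 hβ (hyk n)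
    · rw [hw n]; linarith [hpos (n+1)]
    · rw [hw n]; linarith [hlt1 (n+1)]
    · exact hpos n
    · exact hlt1 n
  have hTiter : ∀ n, (TAB α β)^[n] (s 0) = s n := by
    intro n
    induction n with
    | zero => rfl
    | succ n ih =>
      rw [Function.iterate_succ_apply', ih, TAB_eval hα0 hα1 hβ (hyk n) (hmemI n), hw n]
      ring
  refine ⟨s 0, ⟨⟨(hpos 0).le, (hlt1 0).le⟩, ?_⟩, ?_⟩
  · rintro ⟨_, m, hS0, _⟩
    rw [hTiter m] at hS0
    exact notS0_of_memI hα0 hα1 hβ (hyk m) (hmemI m) hS0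
  · funext n
    exact (codeAB_eval hα0 hα1 hβ (hyk n) (by rw [hTiter n]; exact hmemI n)).symm

end Aux7

/-- **Validity of the φ-expansion for `βx + α mod 1`.** For `0 ≤ α < 1 < β` and
`k = ⌈α+β⌉`: (i) for every `x ∈ [0,1] ∖ S`, `limₙ φ̄ₙ^{α,β}(i(x)) = x`;
(ii) `{i(x) : x ∈ [0,1] ∖ S} = {x ∈ A^ℕ : u^{α,β} ≺ σⁿx ≺ v^{α,β} for all n ≥ 0}`;
(iii) `u^{α,β} ≼ σⁿu^{α,β} ≺ v^{α,β}` and `u^{α,β} ≺ σⁿv^{α,β} ≼ v^{α,β}` for all `n ≥ 0`. -/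
theorem beta_alpha_mod_one_valid (α β : ℝ) (hα0 : 0 ≤ α) (hα1 : α < 1) (hβ : 1 < β) :
    (∀ x ∈ Set.Icc (0 : ℝ) 1 \ SAB α β,
      Filter.Tendsto (fun n => phiBN α β n (codeAB α β x)) Filter.atTop (nhds x)) ∧
    ({y : ℕ → ℕ | ∃ x ∈ Set.Icc (0 : ℝ) 1 \ SAB α β, y = codeAB α β x} =
      {x : ℕ → ℕ | (∀ i, x i < kAB α β) ∧
        ∀ n, lexLt (uItin α β) (shft^[n] x) ∧ lexLt (shft^[n] x) (vItin α β)}) ∧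
    (∀ n, lexLe (uItin α β) (shft^[n] (uItin α β)) ∧
          lexLt (shft^[n] (uItin α β)) (vItin α β) ∧
          lexLt (uItin α β) (shft^[n] (vItin α β)) ∧
          lexLe (shft^[n] (vItin α β)) (vItin α β)) := by
  refine ⟨?_, ?_, ?_⟩
  · intro x hx
    exact good_tendsto hα0 hα1 hβ (good_of_mem hα0 hα1 hβ hx)
  · ext y
    simp only [Set.mem_setOf_eq]
    constructor
    · rintro ⟨x, hx, rfl⟩
      have hg := good_of_mem hα0 hα1 hβ hx
      constructor
      · intro i
        obtain ⟨j, hj, hm⟩ := hg i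
        rw [codeAB_eval hα0 hα1 hβ hj hm]
        exact hj
      · intro n
        obtain ⟨j, hj, hm⟩ := hg n
        obtain ⟨_, hs0, hs1⟩ := I_bounds hα0 hα1 hβ hj hm
        have hscn := good_shft_code_iter hα0 hα1 hβ hg n
        have hgi := good_iterate hα0 hα1 hβ hg n
        have hcit := good_code_itL hα0 hα1 hβ hgi
        constructor
        · rw [hscn, hcit.2, uItin_eq_itL]
          exact cmp_lt hα0 hβ le_rfl hs0 hs1.le
        · rw [hscn, hcit.1, vItin_eq_itU]
          exact cmp_lt hα0 hβ hs0.le hs1 le_rfl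
    · rintro ⟨hyk, hyuv⟩
      exact admissible_realized hα0 hα1 hβ hyk (fun n => (hyuv n).1) (fun n => (hyuv n).2)
  · intro n
    have h1 : shft^[n] (uItin α β) = itL α β ((Tlow α β)^[n] 0) := by
      rw [uItin_eq_itL, itL_shift]
    have h2 : shft^[n] (vItin α β) = itU α β ((Thigh α β)^[n] 1) := by
      rw [vItin_eq_itU, itU_shift]
    have hu0 : (0:ℝ) ≤ (Tlow α β)^[n] 0 := Tlow_iter_nonneg le_rfl n
    have hu1 : (Tlow α β)^[n] (0:ℝ) < 1 := Tlow_iter_lt_one (by norm_num) n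
    have hv0 : (0:ℝ) < (Thigh α β)^[n] 1 := Thigh_iter_pos one_pos n
    have hv1 : (Thigh α β)^[n] (1:ℝ) ≤ 1 := Thigh_iter_le_one le_rfl n
    refine ⟨?_, ?_, ?_, ?_⟩
    · rw [h1, uItin_eq_itL]
      exact cmp_leL hα0 hβ le_rfl hu0
    · rw [h1, vItin_eq_itU]
      exact cmp_lt hα0 hβ hu0 hu1 le_rfl
    · rw [h2, uItin_eq_itL]
      exact cmp_lt hα0 hβ le_rfl hv0 hv1
    · rw [h2, vItin_eq_itU]
      exact cmp_leU hα0 hβ hv0 hv1
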